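/- Let p be a prime and let K be a finite field with |K| = 3^p. Let G be the set of all permutations f of K for which there exist a ∈ K with a ≠ 0, b ∈ K, and a ring automorphism σ of K such that f(x) = a·σ(x) + b for all x ∈ K. Then G is a subgroup of the group of permutations of K, and with its natural action on Ω = K, the pair (G, Ω) satisfies Hypothesis (3fix). -/

import Mathlib

/-- Hypothesis (3fix): the action of `G` on `Ω` is faithful and transitive, every element
of `G` fixing at least four distinct points of `Ω` is the identity, and some nontrivial
element of `G` fixes at least three distinct points of `Ω`. -/
def Hyp3fix (G : Type*) [Group G] (Ω : Type*) [MulAction G Ω] : Prop :=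
  MulAction.IsPretransitive G Ω ∧
  (∀ g : G, (∀ ω : Ω, g • ω = ω) → g = 1) ∧
  (∀ g : G, ∀ a b c d : Ω, a ≠ b → a ≠ c → a ≠ d → b ≠ c → b ≠ d → c ≠ d →
      g • a = a → g • b = b → g • c = c → g • d = d → g = 1) ∧
  (∃ g : G, g ≠ 1 ∧ ∃ a b c : Ω, a ≠ b ∧ a ≠ c ∧ b ≠ c ∧
      g • a = a ∧ g • b = b ∧ g • c = c)

/-- The fixed "subfield" of a ring automorphism of a field. -/
def fixedSubfield {K : Type*} [Field K] (σ : K ≃+* K) : Subfield K where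
  carrier := {x | σ x = x}
  mul_mem' := fun {a b} ha hb => by
    simp only [Set.mem_setOf_eq] at *
    rw [map_mul, ha, hb]
  one_mem' := by simp
  add_mem' := fun {a b} ha hb => by
    simp only [Set.mem_setOf_eq] at *
    rw [map_add, ha, hb]
  zero_mem' := by simp
  neg_mem' := fun {a} ha => by
    simp only [Set.mem_setOf_eq] at *
    rw [map_neg, ha]
  inv_mem' := fun a ha => by
    simp only [Set.mem_setOf_eq] at *
    rw [map_inv₀, ha]

/-- If a ring automorphism of a field of cardinality `3 ^ p`, `p` prime, fixes four
distinct elements, then it is the identity. -/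
theorem sigma_eq_id_of_four_fixed {K : Type*} [Field K] [Fintype K]
    (p : ℕ) (hp : p.Prime) (hcard : Fintype.card K = 3 ^ p) (σ : K ≃+* K)
    (c₀ c₁ c₂ c₃ : K) (h01 : c₀ ≠ c₁) (h02 : c₀ ≠ c₂) (h03 : c₀ ≠ c₃)
    (h12 : c₁ ≠ c₂) (h13 : c₁ ≠ c₃) (h23 : c₂ ≠ c₃)
    (f0 : σ c₀ = c₀) (f1 : σ c₁ = c₁) (f2 : σ c₂ = c₂) (f3 : σ c₃ = c₃) :
    ∀ x : K, σ x = x := by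
  classical
  set F : Subfield K := fixedSubfield σ with hF
  haveI : Fintype F := Fintype.ofFinite F
  have key : Fintype.card K = Fintype.card F ^ Module.finrank F K := Module.card_eq_pow_finrank
  -- four distinct elements in `F`
  have hm0 : c₀ ∈ F := f0
  have hm1 : c₁ ∈ F := f1
  have hm2 : c₂ ∈ F := f2
  have hm3 : c₃ ∈ F := f3
  have hc4 : 4 ≤ Fintype.card F := by
    have hcards :
        ({⟨c₀, hm0⟩, ⟨c₁, hm1⟩, ⟨c₂, hm2⟩, ⟨c₃, hm3⟩} : Finset F).card = 4 := by
      simp [Finset.card_insert_of_notMem, Subtype.ext_iff, h01, h02, h03, h12, h13, h23]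
    calc (4 : ℕ) = _ := hcards.symm
      _ ≤ Finset.univ.card :=
          Finset.card_le_card (Finset.subset_univ _)
      _ = Fintype.card F := rfl
  -- finrank is nonzero
  have hn : Module.finrank F K ≠ 0 := by
    intro h
    rw [h, pow_zero, hcard] at key
    have h3 : (1 : ℕ) < 3 ^ p := Nat.one_lt_pow hp.ne_zero (by norm_num)
    omega
  -- `card F` is a power of 3
  have hFdvd : Fintype.card F ∣ 3 ^ p := by
    rw [← hcard, key]
    exact dvd_pow_self _ hn
  obtain ⟨d, hdle, hFd⟩ := (Nat.dvd_prime_pow Nat.prime_three).mp hFdvd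
  have hdn : d * Module.finrank F K = p := by
    have h3 : (3 : ℕ) ^ (d * Module.finrank F K) = 3 ^ p := by
      rw [pow_mul, ← hFd, ← key, hcard]
    exact Nat.pow_right_injective (by norm_num) h3
  rcases hp.eq_one_or_self_of_dvd d ⟨_, hdn.symm⟩ with h1 | hdp
  · rw [h1, pow_one] at hFd
    omega
  · -- d = p, so finrank = 1 and F = K
    have hn1 : Module.finrank F K = 1 := by
      rw [hdp] at hdn
      have hp0 := hp.pos
      nlinarith [Nat.one_le_iff_ne_zero.mpr hn]
    have hcardeq : Fintype.card F = Fintype.card K := by rw [key, hn1, pow_one]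
    have hsurj : Function.Surjective (Subtype.val : F → K) :=
      ((Fintype.bijective_iff_injective_and_card _).mpr
        ⟨Subtype.coe_injective, hcardeq⟩).2
    intro x
    obtain ⟨y, rfl⟩ := hsurj x
    exact y.2

/-- A finite field of cardinality `3 ^ p` has characteristic `3`. -/
theorem charP_three_of_card {K : Type*} [Field K] [Fintype K]
    (p : ℕ) (hcard : Fintype.card K = 3 ^ p) : CharP K 3 := by
  haveI h := ringChar.charP K
  obtain ⟨n, hnp, hq⟩ := FiniteField.card K (ringChar K)
  have hdvd : ringChar K ∣ 3 ^ p := by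
    rw [← hcard, hq]
    exact dvd_pow_self _ n.pos.ne'
  have h3 : ringChar K = 3 :=
    (Nat.prime_dvd_prime_iff_eq hnp Nat.prime_three).mp (hnp.dvd_of_dvd_pow hdvd)
  rwa [h3] at h

set_option maxHeartbeats 1600000 in
/-- Let `p` be a prime, `K` a finite field with `|K| = 3^p`, and let `G` be the set
of permutations of `K` of the form `x ↦ a·σ(x) + b` with `a ≠ 0`, `b ∈ K` and `σ` a
ring automorphism of `K`. Then `G` is a subgroup of the permutation group of `K` and,
with its natural action on `K`, satisfies Hypothesis (3fix). -/
theorem hyp3fix_semilinear_group (p : ℕ) (hp : p.Prime)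
    (K : Type*) [Field K] [Fintype K] (hcard : Fintype.card K = 3 ^ p) :
    ∃ G : Subgroup (Equiv.Perm K),
      (∀ f : Equiv.Perm K, f ∈ G ↔
        ∃ (a b : K) (σ : K ≃+* K), a ≠ 0 ∧ ∀ x : K, f x = a * σ x + b) ∧
      Hyp3fix G K := by
  classical
  haveI hchar : CharP K 3 := charP_three_of_card p hcard
  haveI : Fact (Nat.Prime 3) := ⟨Nat.prime_three⟩
  haveI : ExpChar K 3 := ExpChar.prime Nat.prime_three
  refine ⟨{
      carrier := {f : Equiv.Perm K |
        ∃ (a b : K) (σ : K ≃+* K), a ≠ 0 ∧ ∀ x : K, f x = a * σ x + b}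
      one_mem' := ⟨1, 0, RingEquiv.refl K, one_ne_zero, fun x => by simp⟩
      mul_mem' := ?_
      inv_mem' := ?_ }, fun f => Iff.rfl, ?_⟩
  · rintro f g ⟨a₁, b₁, σ₁, ha₁, hf⟩ ⟨a₂, b₂, σ₂, ha₂, hg⟩
    refine ⟨a₁ * σ₁ a₂, a₁ * σ₁ b₂ + b₁, σ₂.trans σ₁,
      mul_ne_zero ha₁ (fun h => ha₂ (σ₁.injective (h.trans (map_zero σ₁).symm))),
      fun x => ?_⟩
    rw [Equiv.Perm.mul_apply, hg, hf, map_add, map_mul, RingEquiv.trans_apply]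
    ring
  · rintro f ⟨a, b, σ, ha, hf⟩
    refine ⟨σ.symm a⁻¹, σ.symm (-(b * a⁻¹)), σ.symm,
      fun h => inv_ne_zero ha (σ.symm.injective (h.trans (map_zero σ.symm).symm)),
      fun y => f.injective ?_⟩
    rw [Equiv.Perm.inv_def, Equiv.apply_symm_apply, hf, map_add, map_mul, RingEquiv.apply_symm_apply,
      RingEquiv.apply_symm_apply, RingEquiv.apply_symm_apply]
    field_simp
    ring
  · refine ⟨⟨fun x y => ?_⟩, fun g hg => Subtype.ext (Equiv.ext fun x => hg x), ?_, ?_⟩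
    · -- transitivity via translations
      refine ⟨⟨Equiv.addRight (y - x),
        ⟨1, y - x, RingEquiv.refl K, one_ne_zero, fun z => by
          simp only [Equiv.coe_addRight, RingEquiv.refl_apply]; ring⟩⟩, ?_⟩
      show x + (y - x) = y
      ring
    · -- four fixed points imply identity
      rintro ⟨g, a, b, σ, ha, hf⟩ x₀ x₁ x₂ x₃ h01 h02 h03 h12 h13 h23 e0 e1 e2 e3
      have E0 : a * σ x₀ + b = x₀ := by rw [← hf]; exact e0
      have E1 : a * σ x₁ + b = x₁ := by rw [← hf]; exact e1
      have E2 : a * σ x₂ + b = x₂ := by rw [← hf]; exact e2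
      have E3 : a * σ x₃ + b = x₃ := by rw [← hf]; exact e3
      -- differences are "eigenvectors": a * σ d = d
      have hd : ∀ {x y : K}, a * σ x + b = x → a * σ y + b = y →
          σ (x - y) = a⁻¹ * (x - y) := by
        intro x y hx hy
        have h : a * σ (x - y) = x - y := by
          rw [map_sub]; linear_combination hx - hy
        rw [inv_mul_eq_div, eq_div_iff ha, mul_comm]
        exact h
      have d1 : σ (x₁ - x₀) = a⁻¹ * (x₁ - x₀) := hd E1 E0
      have d2 : σ (x₂ - x₀) = a⁻¹ * (x₂ - x₀) := hd E2 E0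
      have d3 : σ (x₃ - x₀) = a⁻¹ * (x₃ - x₀) := hd E3 E0
      have hne1 : x₁ - x₀ ≠ 0 := sub_ne_zero.mpr (Ne.symm h01)
      have hne2 : x₂ - x₀ ≠ 0 := sub_ne_zero.mpr (Ne.symm h02)
      have hne3 : x₃ - x₀ ≠ 0 := sub_ne_zero.mpr (Ne.symm h03)
      -- quotients are fixed by σ
      have hfix : ∀ {u : K}, σ u = a⁻¹ * u → σ (u / (x₁ - x₀)) = u / (x₁ - x₀) := by
        intro u hu
        rw [map_div₀, hu, d1, mul_div_mul_left _ _ (inv_ne_zero ha)]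
      -- the four fixed elements 0, 1, (x₂-x₀)/(x₁-x₀), (x₃-x₀)/(x₁-x₀)
      set u₂ : K := (x₂ - x₀) / (x₁ - x₀) with hu₂
      set u₃ : K := (x₃ - x₀) / (x₁ - x₀) with hu₃
      have fu₂ : σ u₂ = u₂ := hfix d2
      have fu₃ : σ u₃ = u₃ := hfix d3
      have g01 : (0 : K) ≠ 1 := zero_ne_one
      have g02 : (0 : K) ≠ u₂ := (div_ne_zero hne2 hne1).symm
      have g03 : (0 : K) ≠ u₃ := (div_ne_zero hne3 hne1).symm
      have g12 : (1 : K) ≠ u₂ := by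
        intro h
        rw [hu₂, eq_comm, div_eq_one_iff_eq hne1] at h
        exact h12 (sub_left_inj.mp h).symm
      have g13 : (1 : K) ≠ u₃ := by
        intro h
        have h' : x₃ - x₀ = x₁ - x₀ := by
          rw [hu₃, eq_comm, div_eq_one_iff_eq hne1] at h
          exact h
        exact h13 (sub_left_inj.mp h').symm
      have g23 : u₂ ≠ u₃ := by
        intro h
        rw [hu₂, hu₃, div_eq_div_iff hne1 hne1] at h
        exact h23 (sub_left_inj.mp (mul_right_cancel₀ hne1 h))
      -- σ is the identity
      have hσ : ∀ x : K, σ x = x :=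
        sigma_eq_id_of_four_fixed p hp hcard σ 0 1 u₂ u₃
          g01 g02 g03 g12 g13 g23 (map_zero σ) (map_one σ) fu₂ fu₃
      -- then a = 1 and b = 0
      have ha1 : a = 1 := by
        have h : a⁻¹ * (x₁ - x₀) = 1 * (x₁ - x₀) := by
          rw [one_mul, ← d1, hσ]
        exact inv_eq_one.mp (mul_right_cancel₀ hne1 h)
      have hb0 : b = 0 := by
        have := E0
        rw [hσ, ha1] at this
        linear_combination this
      exact Subtype.ext (Equiv.ext fun x => by
        rw [hf, hσ, ha1, hb0]
        simp)
    · -- nontrivial element with three fixed points: Frobenius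
      have hbij : Function.Bijective (frobenius K 3) :=
        Finite.injective_iff_bijective.mp (frobenius K 3).injective
      set σ : K ≃+* K := RingEquiv.ofBijective (frobenius K 3) hbij with hσdef
      have hσ : ∀ x : K, σ x = x ^ 3 := fun x => frobenius_def 3 x
      refine ⟨⟨σ.toEquiv, ⟨1, 0, σ, one_ne_zero, fun x => by simp⟩⟩, ?_,
        0, 1, -1, zero_ne_one, ?_, ?_, ?_, ?_, ?_⟩
      · -- nontriviality
        intro h
        have hx : ∀ x : K, x ^ 3 = x := by
          intro x
          have h2 : σ.toEquiv x = x := by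
            have := congrArg (fun e => (Subtype.val e : Equiv.Perm K) x) h
            simpa using this
          rw [← hσ x]
          exact h2
        have hK3 : Fintype.card K ≤ 3 := by
          have hsub : (Finset.univ : Finset K) ⊆ {0, 1, -1} := by
            intro x _
            have h3 : x * (x - 1) * (x + 1) = 0 := by linear_combination hx x
            simp only [Finset.mem_insert, Finset.mem_singleton]
            rcases mul_eq_zero.mp h3 with h' | h'
            · rcases mul_eq_zero.mp h' with h'' | h''
              · exact Or.inl h''
              · exact Or.inr (Or.inl (sub_eq_zero.mp h''))
            · exact Or.inr (Or.inr (eq_neg_of_add_eq_zero_left h'))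
          calc Fintype.card K = Finset.univ.card := rfl
            _ ≤ ({0, 1, -1} : Finset K).card := Finset.card_le_card hsub
            _ ≤ 3 := by
                refine le_trans (Finset.card_insert_le _ _) ?_
                refine le_trans (Nat.add_le_add_right (Finset.card_insert_le _ _) 1) ?_
                simp
        have h9 : 9 ≤ Fintype.card K := by
          rw [hcard]
          calc (9 : ℕ) = 3 ^ 2 := by norm_num
            _ ≤ 3 ^ p := Nat.pow_le_pow_right (by norm_num) hp.two_le
        omega
      · -- 0 ≠ -1
        intro h
        exact one_ne_zero (neg_eq_zero.mp h.symm)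
      · -- 1 ≠ -1
        haveI : Fact (2 < 3) := ⟨by norm_num⟩
        exact fun h => CharP.neg_one_ne_one K 3 h.symm
      · show σ.toEquiv (0 : K) = 0
        simpa using map_zero σ
      · show σ.toEquiv (1 : K) = 1
        simpa using map_one σ
      · show σ.toEquiv (-1 : K) = -1
        rw [show (σ.toEquiv (-1 : K)) = σ (-1) from rfl, map_neg, map_one]
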